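/- The Thue–Morse sequence t : ℕ → Fin 2, defined by t(n) = parity of the number of ones in the binary expansion of n, is not eventually periodic. -/

import Mathlib

/-- The Thue–Morse sequence: parity of the number of ones in the binary expansion. -/
def thueMorse (n : ℕ) : Fin 2 := Fin.ofNat 2 (Nat.digits 2 n).sum

lemma tm_two_mul (n : ℕ) : thueMorse (2 * n) = thueMorse n := by
  rcases Nat.eq_zero_or_pos n with rfl | hn
  · rfl
  · unfold thueMorse
    rw [Nat.digits_def' (by norm_num : 1 < 2) (by omega : 0 < 2 * n)]
    have h1 : 2 * n % 2 = 0 := by omega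
    have h2 : 2 * n / 2 = n := by omega
    rw [h1, h2]
    simp

lemma tm_two_mul_add_one (n : ℕ) : thueMorse (2 * n + 1) = thueMorse n + 1 := by
  unfold thueMorse
  rw [Nat.digits_def' (by norm_num : 1 < 2) (by omega : 0 < 2 * n + 1)]
  have h1 : (2 * n + 1) % 2 = 1 := by omega
  have h2 : (2 * n + 1) / 2 = n := by omega
  rw [h1, h2]
  push_cast [List.sum_cons]
  rw [Fin.ext_iff, Fin.val_add, Fin.val_ofNat, Fin.val_ofNat]
  show (1 + (Nat.digits 2 n).sum) % 2 = ((Nat.digits 2 n).sum % 2 + 1) % 2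
  omega

lemma tm_aux : ∀ p, 0 < p → ∀ N, ¬ ∀ n ≥ N, thueMorse (n + p) = thueMorse n := by
  intro p
  induction p using Nat.strong_induction_on with
  | _ p ih =>
    intro hp N h
    rcases Nat.even_or_odd p with ⟨q, hq⟩ | ⟨a, ha⟩
    · -- p = 2q
      have hq0 : 0 < q := by omega
      apply ih q (by omega) hq0 N
      intro m hm
      have h1 := h (2 * m) (by omega)
      have e1 : 2 * m + p = 2 * (m + q) := by omega
      rw [e1, tm_two_mul, tm_two_mul] at h1
      exact h1
    · -- p = 2a + 1
      have flip : ∀ x y : Fin 2, x + 1 = y ↔ x = y + 1 := by decide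
      have key1 : ∀ m ≥ N, thueMorse (m + a) = thueMorse m + 1 := by
        intro m hm
        have h1 := h (2 * m) (by omega)
        have e1 : 2 * m + p = 2 * (m + a) + 1 := by omega
        rw [e1, tm_two_mul_add_one, tm_two_mul] at h1
        exact (flip _ _).mp h1
      have key2 : ∀ m ≥ N, thueMorse (m + a + 1) = thueMorse m + 1 := by
        intro m hm
        have h1 := h (2 * m + 1) (by omega)
        have e1 : 2 * m + 1 + p = 2 * (m + a + 1) := by omega
        rw [e1, tm_two_mul, tm_two_mul_add_one] at h1
        exact h1
      have step : ∀ j ≥ N + a, thueMorse (j + 1) = thueMorse j := by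
        intro j hj
        have hm : j - a ≥ N := by omega
        have e : j = (j - a) + a := by omega
        rw [e]
        rw [key2 _ hm, ← key1 _ hm]
      have const : ∀ j ≥ N + a, thueMorse j = thueMorse (N + a) := by
        intro j hj
        induction j with
        | zero =>
          have : N + a = 0 := by omega
          rw [this]
        | succ k ihk =>
          rcases Nat.lt_or_ge k (N + a) with hk | hk
          · have : k + 1 = N + a := by omega
            rw [this]
          · rw [step k hk, ihk hk]
      have h1 := key2 (N + a) (by omega)
      have h2 := const (N + a + a + 1) (by omega)
      rw [h2] at h1
      have : ∀ x : Fin 2, x ≠ x + 1 := by decide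
      exact this _ h1

/-- The Thue–Morse sequence is not eventually periodic. -/
theorem thueMorse_not_eventually_periodic :
    ¬ ∃ (N p : ℕ), 0 < p ∧ ∀ n ≥ N, thueMorse (n + p) = thueMorse n := by
  rintro ⟨N, p, hp, h⟩
  exact tm_aux p hp N h
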